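/- Let Q be a polarization on X := N_ℝ/M', let ℓ : N_ℝ → ℝ be an ℝ-linear form, and for b ∈ M let ϑ_b be the associated tropical theta function, ϑ_b(x) := inf_{u' ∈ M'} ( Q(x, λ_ℝ^{-1}(b) + u') + (1/2) Q(u' + λ_ℝ^{-1}(b) − r, u' + λ_ℝ^{-1}(b) − r) ), where r ∈ N_ℝ is the unique vector with ℓ = Q(·, r). Then ϑ_b is quasi-periodic with respect to (Q, ℓ): for all x ∈ N_ℝ and all u'' ∈ M', ϑ_b(x + u'') = ϑ_b(x) − Q(x, u'') − (1/2) Q(u'', u'') + ℓ(u''). -/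

import Mathlib

/-!
STATEMENT 1: The tropical theta function
`ϑ_b(x) = inf_{u' ∈ M'} ( Q(x, λ_ℝ⁻¹(b) + u') + ½ Q(u' + λ_ℝ⁻¹(b) − r, u' + λ_ℝ⁻¹(b) − r) )`
is quasi-periodic with respect to `(Q, ℓ)`:
`ϑ_b(x + u'') = ϑ_b(x) − Q(x, u'') − ½ Q(u'', u'') + ℓ(u'')` for all `u'' ∈ M'`.

`c` denotes `λ_ℝ⁻¹(b)`, characterized by `⟨b, x⟩ = Q(x, c)` for all `x ∈ N_ℝ = Hom_ℤ(M, ℝ)`.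
-/

noncomputable section

theorem tropical_theta_quasi_periodic
    (M : Type*) [AddCommGroup M] [Module ℤ M] [Module.Free ℤ M] [Module.Finite ℤ M]
    (M' : Submodule ℤ (M →ₗ[ℤ] ℝ))
    (hlat : ∃ (n : ℕ) (bs : Module.Basis (Fin n) ℝ (M →ₗ[ℤ] ℝ)),
      M' = Submodule.span ℤ (Set.range ⇑bs))
    (Q : (M →ₗ[ℤ] ℝ) →ₗ[ℝ] (M →ₗ[ℤ] ℝ) →ₗ[ℝ] ℝ)
    (hsymm : ∀ x y, Q x y = Q y x)
    (hpos : ∀ x, x ≠ 0 → 0 < Q x x)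
    (hint : ∀ u' ∈ M', ∀ g : M →ₗ[ℤ] ℤ, ∃ k : ℤ,
      Q u' ((Int.castAddHom ℝ).toIntLinearMap.comp g) = (k : ℝ))
    (lam : M' →ₗ[ℤ] M)
    (hlam : ∀ (u' : M') (x : M →ₗ[ℤ] ℝ), x (lam u') = Q x (u' : M →ₗ[ℤ] ℝ))
    (ℓ : (M →ₗ[ℤ] ℝ) →ₗ[ℝ] ℝ) (r : M →ₗ[ℤ] ℝ) (hr : ∀ x, ℓ x = Q x r)
    (b : M) (c : M →ₗ[ℤ] ℝ) (hc : ∀ x : M →ₗ[ℤ] ℝ, x b = Q x c)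
    (x u'' : M →ₗ[ℤ] ℝ) (hu'' : u'' ∈ M') :
    sInf {t : ℝ | ∃ u' ∈ M',
        t = Q (x + u'') (c + u') + (1 / 2) * Q (u' + c - r) (u' + c - r)}
      = sInf {t : ℝ | ∃ u' ∈ M',
          t = Q x (c + u') + (1 / 2) * Q (u' + c - r) (u' + c - r)}
        - Q x u'' - (1 / 2) * Q u'' u'' + ℓ u'' := by

  set C : ℝ := - Q x u'' - (1 / 2) * Q u'' u'' + ℓ u'' with hC
  set B : Set ℝ := {t : ℝ | ∃ u' ∈ M',
      t = Q x (c + u') + (1 / 2) * Q (u' + c - r) (u' + c - r)} with hB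
  have hQ0 : ∀ v : M →ₗ[ℤ] ℝ, 0 ≤ Q v v := by
    intro v
    by_cases hv : v = 0
    · simp [hv]
    · exact (hpos v hv).le
  -- key algebraic identity
  have key : ∀ u : M →ₗ[ℤ] ℝ,
      Q (x + u'') (c + u) + (1 / 2) * Q (u + c - r) (u + c - r)
        = (Q x (c + (u + u'')) + (1 / 2) * Q ((u + u'') + c - r) ((u + u'') + c - r)) + C := by
    intro u
    have hℓ : ℓ u'' = Q u'' r := hr u''
    simp only [hC, hℓ, map_add, map_sub, LinearMap.add_apply, LinearMap.sub_apply]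
    have h1 := hsymm u'' u
    have h2 := hsymm u'' c
    have h3 := hsymm u'' r
    ring_nf
    linarith [hsymm u c, hsymm u r, hsymm c r]
  have hne : B.Nonempty := ⟨_, 0, M'.zero_mem, rfl⟩
  have hbdd : BddBelow B := by
    refine ⟨Q x r - (1 / 2) * Q x x, ?_⟩
    rintro t ⟨u, hu, rfl⟩
    have h := hQ0 ((u + c - r) + x)
    simp only [map_add, map_sub, LinearMap.add_apply, LinearMap.sub_apply] at h ⊢
    have hs1 := hsymm x u
    have hs2 := hsymm x c
    have hs3 := hsymm x r
    nlinarith [hsymm u c, hsymm u r, hsymm c r]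
  have himg : {t : ℝ | ∃ u' ∈ M',
      t = Q (x + u'') (c + u') + (1 / 2) * Q (u' + c - r) (u' + c - r)}
      = (fun t => t + C) '' B := by
    ext t
    constructor
    · rintro ⟨u, hu, rfl⟩
      exact ⟨Q x (c + (u + u'')) + (1 / 2) * Q ((u + u'') + c - r) ((u + u'') + c - r),
        ⟨u + u'', M'.add_mem hu hu'', rfl⟩, (key u).symm⟩
    · rintro ⟨s, ⟨u, hu, rfl⟩, rfl⟩
      refine ⟨u - u'', M'.sub_mem hu hu'', ?_⟩
      have := key (u - u'')
      rw [sub_add_cancel] at this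
      linarith
  rw [himg]
  have := (OrderIso.addRight C).map_csInf' hne hbdd
  simp only [OrderIso.addRight_apply] at this
  rw [← this, hC]
  ring

end
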